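/- Let d ≥ 2 and define υ(x) = min(1, |x'|^{-d}, |x_d - |x'|^2|^{-d}) and υ_*(x) = min(1, |x'|^{-d}, |x_d + |x'|^2|^{-d}). Then there exists C_d < ∞ such that T^*(υ)(x) ≤ C_d · υ_*(x)^{1/d} for all x ∈ ℝ^d, where T^*f(x) = ∫_{ℝ^{d-1}} f(x'+t, x_d + |t|^2) dt. -/

import Mathlib

open MeasureTheory

/-- Points of ℝ^d written as `(x', x_d) ∈ ℝ^{d-1} × ℝ`. -/
abbrev Pt (d : ℕ) := EuclideanSpace ℝ (Fin (d - 1)) × ℝ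

/-- The transpose convolution operator `T^*f(x) = ∫_{ℝ^{d-1}} f(x'+t, x_d + |t|²) dt`
acting on nonnegative measurable functions. -/
noncomputable def TstarLin (d : ℕ) (f : Pt d → ENNReal) (x : Pt d) : ENNReal :=
  ∫⁻ t : EuclideanSpace ℝ (Fin (d - 1)), f (x.1 + t, x.2 + ‖t‖ ^ 2)

/-- `υ(x) = min(1, |x'|^{-d}, |x_d - |x'|²|^{-d}) = (max(1, |x'|^d, |x_d - |x'|²|^d))⁻¹`. -/
noncomputable def ups (d : ℕ) (x : Pt d) : ENNReal :=
  ENNReal.ofReal ((max 1 (max (‖x.1‖ ^ d) (|x.2 - ‖x.1‖ ^ 2| ^ d)))⁻¹)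

/-- `υ_*(x) = min(1, |x'|^{-d}, |x_d + |x'|²|^{-d}) = (max(1, |x'|^d, |x_d + |x'|²|^d))⁻¹`. -/
noncomputable def upsStar (d : ℕ) (x : Pt d) : ENNReal :=
  ENNReal.ofReal ((max 1 (max (‖x.1‖ ^ d) (|x.2 + ‖x.1‖ ^ 2| ^ d)))⁻¹)

namespace TstarProof
noncomputable section

open Module ENNReal

abbrev Ee (n : ℕ) := EuclideanSpace ℝ (Fin n)

variable {F : Type*} [NormedAddCommGroup F] [NormedSpace ℝ F]
    [MeasurableSpace F] [BorelSpace F] [FiniteDimensional ℝ F]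

lemma my_lintegral_comp_smul (μ : Measure F) [μ.IsAddHaarMeasure] (f : F → ℝ≥0∞)
    (hf : Measurable f) {R : ℝ} (hR : R ≠ 0) :
    ∫⁻ x, f (R • x) ∂μ = ENNReal.ofReal |(R ^ finrank ℝ F)⁻¹| * ∫⁻ x, f x ∂μ := by
  rw [← lintegral_map hf (measurable_const_smul R), Measure.map_addHaar_smul μ hR,
    lintegral_smul_measure, smul_eq_mul]

lemma max_pow_nonneg {a b : ℝ} (ha : 0 ≤ a) (hb : 0 ≤ b) (n : ℕ) :
    max a b ^ n = max (a ^ n) (b ^ n) := by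
  rcases le_total a b with h | h
  · rw [max_eq_right h, max_eq_right (pow_le_pow_left₀ ha h n)]
  · rw [max_eq_left h, max_eq_left (pow_le_pow_left₀ hb h n)]

omit [NormedSpace ℝ F] [FiniteDimensional ℝ F] in
lemma meas_aux {r : ℕ} : Measurable fun x : F => ENNReal.ofReal (((max 1 ‖x‖) ^ r)⁻¹) := by
  measurability

lemma finite_aux (μ : Measure F) [μ.IsAddHaarMeasure] {r : ℕ} (hr : finrank ℝ F < r) :
    ∫⁻ x, ENNReal.ofReal (((max 1 ‖x‖) ^ r)⁻¹) ∂μ < ⊤ := by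
  have key : ∀ x : F, ((max 1 ‖x‖) ^ r)⁻¹ ≤ 2 ^ r * (1 + ‖x‖) ^ (-(r : ℝ)) := by
    intro x
    have h2 : (0:ℝ) < 1 + ‖x‖ := by positivity
    rw [Real.rpow_neg h2.le, Real.rpow_natCast]
    have h3 : (1 + ‖x‖) ^ r ≤ 2 ^ r * (max 1 ‖x‖) ^ r := by
      rw [← mul_pow]
      apply pow_le_pow_left₀ h2.le
      have := le_max_left (1:ℝ) ‖x‖
      have := le_max_right (1:ℝ) ‖x‖
      linarith
    calc ((max 1 ‖x‖) ^ r)⁻¹ = 2 ^ r * (2 ^ r * (max 1 ‖x‖) ^ r)⁻¹ := by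
          field_simp
      _ ≤ 2 ^ r * ((1 + ‖x‖) ^ r)⁻¹ := by gcongr <;> positivity
  have hint : Integrable (fun x : F => (1 + ‖x‖) ^ (-(r : ℝ))) μ :=
    integrable_one_add_norm (by exact_mod_cast hr)
  calc ∫⁻ x, ENNReal.ofReal (((max 1 ‖x‖) ^ r)⁻¹) ∂μ
      ≤ ∫⁻ x, ENNReal.ofReal (2 ^ r * (1 + ‖x‖) ^ (-(r : ℝ))) ∂μ :=
        lintegral_mono fun x => ENNReal.ofReal_le_ofReal (key x)
    _ = ENNReal.ofReal (2 ^ r) * ∫⁻ x, ENNReal.ofReal ((1 + ‖x‖) ^ (-(r : ℝ))) ∂μ := by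
        simp_rw [ENNReal.ofReal_mul (by positivity : (0:ℝ) ≤ 2 ^ r)]
        exact lintegral_const_mul' _ _ ofReal_ne_top
    _ < ⊤ := by
        apply ENNReal.mul_lt_top ofReal_lt_top
        have := hint.2
        rwa [HasFiniteIntegral, lintegral_enorm_of_nonneg
          (fun x => Real.rpow_nonneg (by positivity) _)] at this

def Iconst (m : ℕ) : ℝ≥0∞ := ∫⁻ w : Ee m, ENNReal.ofReal (((max 1 ‖w‖) ^ (m + 2))⁻¹)

def Bconst : ℝ≥0∞ := ∫⁻ v : ℝ, ENNReal.ofReal (((max 1 ‖v‖) ^ 2)⁻¹)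

lemma Iconst_lt_top (m : ℕ) : Iconst m < ⊤ :=
  finite_aux _ (by simp [finrank_euclideanSpace_fin])

lemma Bconst_lt_top : Bconst < ⊤ :=
  finite_aux _ (by simp)

lemma scaled_eq (μ : Measure F) [μ.IsAddHaarMeasure] (r : ℕ) {ρ : ℝ} (hρ : 1 ≤ ρ) :
    ∫⁻ x, ENNReal.ofReal (((max ρ ‖x‖) ^ r)⁻¹) ∂μ
      = ENNReal.ofReal (ρ ^ finrank ℝ F * (ρ ^ r)⁻¹) *
        ∫⁻ x, ENNReal.ofReal (((max 1 ‖x‖) ^ r)⁻¹) ∂μ := by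
  have hρ0 : (0:ℝ) < ρ := lt_of_lt_of_le one_pos hρ
  have h1 : ∀ x : F, ENNReal.ofReal (((max 1 ‖ρ⁻¹ • x‖) ^ r)⁻¹)
      = ENNReal.ofReal (ρ ^ r) * ENNReal.ofReal (((max ρ ‖x‖) ^ r)⁻¹) := by
    intro x
    rw [← ENNReal.ofReal_mul (by positivity)]
    congr 1
    rw [norm_smul, norm_inv, Real.norm_eq_abs, abs_of_pos hρ0]
    have : max 1 (ρ⁻¹ * ‖x‖) = ρ⁻¹ * max ρ ‖x‖ := by
      rw [mul_max_of_nonneg _ _ (by positivity : (0:ℝ) ≤ ρ⁻¹), inv_mul_cancel₀ hρ0.ne']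
    rw [this, mul_pow, mul_inv, inv_pow, inv_inv]
  have h2 := my_lintegral_comp_smul μ (fun x => ENNReal.ofReal (((max 1 ‖x‖) ^ r)⁻¹))
    meas_aux (inv_ne_zero hρ0.ne')
  simp_rw [h1] at h2
  rw [lintegral_const_mul' _ _ ofReal_ne_top] at h2
  have hρr : ENNReal.ofReal (ρ ^ r) ≠ 0 := (ENNReal.ofReal_pos.2 (by positivity)).ne'
  have key : ∫⁻ x, ENNReal.ofReal (((max ρ ‖x‖) ^ r)⁻¹) ∂μ
      = (ENNReal.ofReal (ρ ^ r))⁻¹ * (ENNReal.ofReal |((ρ⁻¹) ^ finrank ℝ F)⁻¹| *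
          ∫⁻ x, ENNReal.ofReal (((max 1 ‖x‖) ^ r)⁻¹) ∂μ) := by
    rw [← h2, ← mul_assoc, ENNReal.inv_mul_cancel hρr ofReal_ne_top, one_mul]
  rw [key, ← ENNReal.ofReal_inv_of_pos (by positivity), ← mul_assoc,
    ← ENNReal.ofReal_mul (by positivity)]
  have : (ρ ^ r)⁻¹ * |((ρ⁻¹) ^ finrank ℝ F)⁻¹| = ρ ^ finrank ℝ F * (ρ ^ r)⁻¹ := by
    rw [inv_pow, inv_inv, abs_of_pos (by positivity)]
    ring
  rw [this]

lemma affine_eq (g : ℝ → ℝ≥0∞) (hg : Measurable g) (s : ℝ) {a : ℝ} (ha : 0 < a) :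
    ∫⁻ v : ℝ, g (s - a * v) = ENNReal.ofReal a⁻¹ * ∫⁻ v : ℝ, g v := by
  have step1 : ∫⁻ v : ℝ, g (s - a * v) = ∫⁻ v : ℝ, g (s + a * v) := by
    have hmp := Measure.measurePreserving_neg (volume : Measure ℝ)
    have := hmp.lintegral_comp (f := fun v : ℝ => g (s + a * v))
      (hg.comp (measurable_const.add (measurable_const_mul a)))
    rw [← this]
    simp_rw [mul_neg, ← sub_eq_add_neg]
  have step2 : ∫⁻ v : ℝ, g (s + a * v) = ENNReal.ofReal |(a ^ finrank ℝ ℝ)⁻¹| *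
      ∫⁻ w : ℝ, g (s + w) := by
    have := my_lintegral_comp_smul (volume : Measure ℝ)
      (fun w : ℝ => g (s + w)) (hg.comp (measurable_const.add measurable_id)) ha.ne'
    simpa [smul_eq_mul] using this
  rw [step1, step2, show (∫⁻ w : ℝ, g (s + w)) = ∫⁻ v : ℝ, g v from
    lintegral_add_left_eq_self g s]
  congr 1
  rw [finrank_self, pow_one, abs_of_pos (by positivity)]

lemma outer (a s : ℝ) (ha : 0 ≤ a) :
    ∫⁻ v : ℝ, ENNReal.ofReal (((max 1 (max |v| |s - a * v|)) ^ 2)⁻¹)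
      ≤ ENNReal.ofReal (2 * (max 1 (max a |s|))⁻¹) * Bconst := by
  set R : ℝ := max 1 (|s| / (1 + a)) with hRdef
  have h1a : (0:ℝ) < 1 + a := by positivity
  have hR1 : (1:ℝ) ≤ R := le_max_left _ _
  have hR0 : (0:ℝ) < R := lt_of_lt_of_le one_pos hR1
  have hsR : |s| ≤ R * (1 + a) := by
    have := le_max_right (1:ℝ) (|s| / (1 + a))
    calc |s| = |s| / (1 + a) * (1 + a) := by field_simp
      _ ≤ R * (1 + a) := by gcongr
  set M₀ : ℝ := max 1 (max a |s|) with hM₀def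
  have hM₀0 : (0:ℝ) < M₀ := lt_of_lt_of_le one_pos (le_max_left _ _)
  have hscale : ∫⁻ v : ℝ, ENNReal.ofReal (((max R |v|) ^ 2)⁻¹)
      = ENNReal.ofReal R⁻¹ * Bconst := by
    have h := scaled_eq (volume : Measure ℝ) 2 hR1
    simp only [Real.norm_eq_abs] at h
    rw [Bconst]
    simp only [Real.norm_eq_abs]
    rw [h]
    congr 2
    rw [finrank_self, pow_one]
    field_simp
  have hkey : ∀ v : ℝ, R ≤ max 1 (max |v| |s - a * v|) := by
    intro v
    set D := max 1 (max |v| |s - a * v|) with hD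
    have hD1 : (1:ℝ) ≤ D := le_max_left _ _
    have h2 : |s - a * v| ≤ D := le_trans (le_max_right _ _) (le_max_right _ _)
    have h3 : |v| ≤ D := le_trans (le_max_left _ _) (le_max_right _ _)
    apply max_le hD1
    rw [div_le_iff₀ h1a]
    have habs : |s| ≤ |s - a * v| + a * |v| := by
      calc |s| = |(s - a * v) + a * v| := by ring_nf
        _ ≤ |s - a * v| + |a * v| := abs_add_le _ _
        _ = |s - a * v| + a * |v| := by rw [abs_mul, abs_of_nonneg ha]
    nlinarith
  have branch1 : ∫⁻ v : ℝ, ENNReal.ofReal (((max 1 (max |v| |s - a * v|)) ^ 2)⁻¹)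
      ≤ ENNReal.ofReal R⁻¹ * Bconst := by
    rw [← hscale]
    apply lintegral_mono
    intro v
    apply ENNReal.ofReal_le_ofReal
    have h3 : |v| ≤ max 1 (max |v| |s - a * v|) := le_trans (le_max_left _ _) (le_max_right _ _)
    have hle : max R |v| ≤ max 1 (max |v| |s - a * v|) := max_le (hkey v) h3
    gcongr
  rcases le_total a 1 with hcase | hcase
  · refine branch1.trans (mul_le_mul_left (ENNReal.ofReal_le_ofReal ?_) _)
    rw [show (2 : ℝ) * M₀⁻¹ = 2 / M₀ by ring, ← one_div, div_le_div_iff₀ hR0 hM₀0]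
    have : M₀ ≤ 2 * R := by
      apply max_le (by linarith)
      apply max_le (by linarith)
      nlinarith
    linarith
  · have ha0 : (0:ℝ) < a := lt_of_lt_of_le one_pos hcase
    have hgm : Measurable (fun w : ℝ => ENNReal.ofReal (((max R |w|) ^ 2)⁻¹)) := by
      apply Measurable.ennreal_ofReal
      exact ((measurable_const.max measurable_abs).pow_const 2).inv
    have branch2 : ∫⁻ v : ℝ, ENNReal.ofReal (((max 1 (max |v| |s - a * v|)) ^ 2)⁻¹)
        ≤ ENNReal.ofReal a⁻¹ * (ENNReal.ofReal R⁻¹ * Bconst) := by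
      rw [← hscale, ← affine_eq _ hgm s ha0]
      apply lintegral_mono
      intro v
      apply ENNReal.ofReal_le_ofReal
      have h2 : |s - a * v| ≤ max 1 (max |v| |s - a * v|) :=
        le_trans (le_max_right _ _) (le_max_right _ _)
      have hle : max R |s - a * v| ≤ max 1 (max |v| |s - a * v|) := max_le (hkey v) h2
      gcongr
    refine branch2.trans ?_
    rw [← mul_assoc, ← ENNReal.ofReal_mul (by positivity)]
    refine mul_le_mul_left (ENNReal.ofReal_le_ofReal ?_) _
    rw [show (2 : ℝ) * M₀⁻¹ = 2 / M₀ by ring,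
      show a⁻¹ * R⁻¹ = 1 / (a * R) by rw [one_div, mul_inv],
      div_le_div_iff₀ (by positivity) hM₀0]
    have h1 : M₀ ≤ 2 * (a * R) := by
      apply max_le (by nlinarith)
      apply max_le (by nlinarith)
      nlinarith
    linarith

def τ (m : ℕ) : (ℝ × Ee m) ≃ᵐ Ee (m+1) :=
  (((MeasurableEquiv.refl ℝ).prodCongr ((MeasurableEquiv.toLp 2 (Fin m → ℝ)).symm)).trans
    ((MeasurableEquiv.piFinSuccAbove (fun _ : Fin (m+1) => ℝ) 0).symm)).trans
    (MeasurableEquiv.toLp 2 (Fin (m+1) → ℝ))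

lemma hτ (m : ℕ) : MeasurePreserving (τ m) volume volume := by
  have h3 : MeasurePreserving
      (Prod.map (id : ℝ → ℝ) ((MeasurableEquiv.toLp 2 (Fin m → ℝ)).symm))
      (volume.prod volume) (volume.prod volume) :=
    (MeasurePreserving.id volume).prod
      (EuclideanSpace.volume_preserving_symm_measurableEquiv_toLp (Fin m))
  have h2 := (volume_preserving_piFinSuccAbove (fun _ : Fin (m+1) => ℝ) 0).symm
  have h1 := (EuclideanSpace.volume_preserving_symm_measurableEquiv_toLp (Fin (m+1))).symm
  exact h1.comp (h2.comp h3)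

lemma τ_apply (m : ℕ) (p : ℝ × Ee m) (i : Fin (m+1)) :
    τ m p i = Fin.insertNth (α := fun _ : Fin (m+1) => ℝ) 0 p.1 (fun j => p.2 j) i := rfl

lemma τ_apply_zero (m : ℕ) (p : ℝ × Ee m) : τ m p 0 = p.1 := by
  rw [τ_apply]
  simp

lemma τ_norm_sq (m : ℕ) (p : ℝ × Ee m) : ‖τ m p‖ ^ 2 = p.1 ^ 2 + ‖p.2‖ ^ 2 := by
  have h1 : ‖τ m p‖ ^ 2 = ∑ i, ‖τ m p i‖ ^ 2 := by
    rw [EuclideanSpace.norm_eq, Real.sq_sqrt (by positivity)]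
  have h2 : ‖p.2‖ ^ 2 = ∑ j, ‖p.2 j‖ ^ 2 := by
    rw [EuclideanSpace.norm_eq, Real.sq_sqrt (by positivity)]
  have h3 : ‖p.1‖ ^ 2 = p.1 ^ 2 := by rw [Real.norm_eq_abs, sq_abs]
  rw [h1, Fin.sum_univ_succAbove _ 0, h2, τ_apply_zero, h3]
  congr 1

lemma core (m : ℕ) (a s : ℝ) (ha : 0 ≤ a) :
    ∫⁻ v : Ee (m+1), ENNReal.ofReal
        ((max 1 (max (‖v‖ ^ (m+2)) (|s - a * v 0| ^ (m+2))))⁻¹)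
      ≤ ENNReal.ofReal (2 * (max 1 (max a |s|))⁻¹) * Bconst * Iconst m := by
  set Φ : Ee (m+1) → ℝ≥0∞ := fun v => ENNReal.ofReal
      ((max 1 (max (‖v‖ ^ (m+2)) (|s - a * v 0| ^ (m+2))))⁻¹) with hΦdef
  set ρf : ℝ → ℝ := fun t => max 1 (max |t| |s - a * t|) with hρfdef
  have hρf1 : ∀ t, 1 ≤ ρf t := fun t => le_max_left _ _
  set Ψ : ℝ × Ee m → ℝ≥0∞ := fun p =>
    ENNReal.ofReal (((max (ρf p.1) ‖p.2‖) ^ (m+2))⁻¹) with hΨdef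
  have hΨm : Measurable Ψ := by
    apply Measurable.ennreal_ofReal
    apply Measurable.inv
    apply Measurable.pow_const
    apply Measurable.max _ measurable_snd.norm
    apply Measurable.max measurable_const
    exact (measurable_fst.abs).max ((measurable_const.sub (measurable_fst.const_mul a)).abs)
  have hpt : ∀ p : ℝ × Ee m, Φ (τ m p) ≤ Ψ p := by
    intro p
    apply ENNReal.ofReal_le_ofReal
    have h1 : |p.1| ≤ ‖τ m p‖ := by
      rw [← Real.sqrt_sq_eq_abs, ← Real.sqrt_sq (norm_nonneg (τ m p))]
      apply Real.sqrt_le_sqrt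
      rw [τ_norm_sq]
      nlinarith [sq_nonneg ‖p.2‖]
    have h2 : ‖p.2‖ ≤ ‖τ m p‖ := by
      rw [← Real.sqrt_sq (norm_nonneg p.2), ← Real.sqrt_sq (norm_nonneg (τ m p))]
      apply Real.sqrt_le_sqrt
      rw [τ_norm_sq]
      nlinarith [sq_nonneg p.1]
    rw [τ_apply_zero]
    set Y := max 1 (max (‖τ m p‖ ^ (m+2)) (|s - a * p.1| ^ (m+2))) with hY
    have hkey : (max (ρf p.1) ‖p.2‖) ^ (m+2) ≤ Y := by
      rw [max_pow_nonneg (le_trans zero_le_one (hρf1 p.1)) (norm_nonneg _)]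
      apply max_le
      · rw [hρfdef]
        simp only []
        rw [max_pow_nonneg zero_le_one (by positivity), one_pow,
          max_pow_nonneg (abs_nonneg _) (abs_nonneg _)]
        apply max_le (le_max_left _ _)
        apply max_le
        · exact le_trans (le_trans (pow_le_pow_left₀ (abs_nonneg _) h1 _)
            (le_max_left _ _)) (le_max_right _ _)
        · exact le_trans (le_max_right _ _) (le_max_right _ _)
      · exact le_trans (le_trans (pow_le_pow_left₀ (norm_nonneg _) h2 _)
          (le_max_left _ _)) (le_max_right _ _)
    gcongr
  calc ∫⁻ v : Ee (m+1), Φ v = ∫⁻ p : ℝ × Ee m, Φ (τ m p) :=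
        (hτ m).lintegral_map_equiv Φ (τ m)
    _ ≤ ∫⁻ p : ℝ × Ee m, Ψ p := lintegral_mono hpt
    _ = ∫⁻ v₀ : ℝ, ∫⁻ w : Ee m, Ψ (v₀, w) := lintegral_prod Ψ hΨm.aemeasurable
    _ = ∫⁻ v₀ : ℝ, ENNReal.ofReal (((ρf v₀) ^ 2)⁻¹) * Iconst m := by
        apply lintegral_congr
        intro v₀
        have h := scaled_eq (volume : Measure (Ee m)) (m+2) (hρf1 v₀)
        rw [finrank_euclideanSpace_fin] at h
        simp only [hΨdef]
        rw [Iconst, h]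
        congr 1
        have hρ0 : (0:ℝ) < ρf v₀ := lt_of_lt_of_le one_pos (hρf1 v₀)
        field_simp
        congr 1
        field_simp
        ring
    _ = (∫⁻ v₀ : ℝ, ENNReal.ofReal (((ρf v₀) ^ 2)⁻¹)) * Iconst m :=
        lintegral_mul_const' _ _ (Iconst_lt_top m).ne
    _ ≤ ENNReal.ofReal (2 * (max 1 (max a |s|))⁻¹) * Bconst * Iconst m :=
        mul_le_mul_left (outer a s ha) _

lemma main_est (m : ℕ) (x1 : Ee (m+1)) (x2 : ℝ) :
    (∫⁻ t : Ee (m+1), ENNReal.ofReal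
        ((max 1 (max (‖x1 + t‖ ^ (m+2)) (|x2 + ‖t‖ ^ 2 - ‖x1 + t‖ ^ 2| ^ (m+2))))⁻¹))
      ≤ (2 * Bconst * Iconst m) *
        (ENNReal.ofReal ((max 1 (max (‖x1‖ ^ (m+2)) (|x2 + ‖x1‖ ^ 2| ^ (m+2))))⁻¹))
          ^ ((1 : ℝ) / (m+2 : ℕ)) := by
  set s : ℝ := x2 + ‖x1‖ ^ 2 with hsdef
  set y : Ee (m+1) := (2:ℝ) • x1 with hydef
  set G : Ee (m+1) → ℝ≥0∞ := fun u => ENNReal.ofReal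
      ((max 1 (max (‖u‖ ^ (m+2)) (|s - (inner ℝ y u : ℝ)| ^ (m+2))))⁻¹) with hGdef
  have hGm : Measurable G := by
    apply Measurable.ennreal_ofReal
    apply Measurable.inv
    apply Measurable.max measurable_const
    apply Measurable.max (measurable_norm.pow_const _)
    exact ((measurable_const.sub
      ((continuous_const.inner continuous_id).measurable)).abs).pow_const _
  have hyn : ‖y‖ = 2 * ‖x1‖ := by
    rw [hydef, norm_smul, Real.norm_eq_abs]
    norm_num
  -- Step 1: rewrite the integrand
  have step1 : (∫⁻ t : Ee (m+1), ENNReal.ofReal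
      ((max 1 (max (‖x1 + t‖ ^ (m+2)) (|x2 + ‖t‖ ^ 2 - ‖x1 + t‖ ^ 2| ^ (m+2))))⁻¹))
      = ∫⁻ t : Ee (m+1), G (x1 + t) := by
    apply lintegral_congr
    intro t
    have hinner : (inner ℝ y (x1 + t) : ℝ) = 2 * ‖x1‖ ^ 2 + 2 * (inner ℝ x1 t : ℝ) := by
      rw [hydef, real_inner_smul_left, inner_add_right, real_inner_self_eq_norm_sq]
      ring
    have hnorm : ‖x1 + t‖ ^ 2 = ‖x1‖ ^ 2 + 2 * (inner ℝ x1 t : ℝ) + ‖t‖ ^ 2 :=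
      norm_add_sq_real x1 t
    have harg : x2 + ‖t‖ ^ 2 - ‖x1 + t‖ ^ 2 = s - (inner ℝ y (x1 + t) : ℝ) := by
      rw [hinner, hnorm, hsdef]
      ring
    rw [hGdef]
    simp only []
    rw [harg]
  -- Step 2: translation invariance
  have step2 : (∫⁻ t : Ee (m+1), G (x1 + t)) = ∫⁻ u : Ee (m+1), G u :=
    lintegral_add_left_eq_self G x1
  -- Step 3: rotation + core estimate
  have step3 : (∫⁻ u : Ee (m+1), G u)
      ≤ ENNReal.ofReal (2 * (max 1 (max ‖y‖ |s|))⁻¹) * Bconst * Iconst m := by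
    rcases eq_or_ne x1 0 with hx0 | hx0
    · have hy0 : y = 0 := by rw [hydef, hx0, smul_zero]
      have hcongr : ∀ u : Ee (m+1), G u = ENNReal.ofReal
          ((max 1 (max (‖u‖ ^ (m+2)) (|s - 0 * u 0| ^ (m+2))))⁻¹) := by
        intro u
        rw [hGdef]
        simp only [hy0, inner_zero_left, zero_mul, sub_zero]
      rw [lintegral_congr hcongr, hy0, norm_zero]
      exact core m 0 s le_rfl
    · have hyne : y ≠ 0 := by
        rw [hydef]
        exact smul_ne_zero two_ne_zero hx0
      set e : Ee (m+1) := ‖y‖⁻¹ • y with hedef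
      have hynorm0 : ‖y‖ ≠ 0 := norm_ne_zero_iff.2 hyne
      have hunit : ‖e‖ = 1 := norm_smul_inv_norm hyne
      have hON : Orthonormal ℝ (({0} : Set (Fin (m+1))).restrict
          (fun _ : Fin (m+1) => e)) := by
        constructor
        · intro i
          exact hunit
        · intro i j hij
          exfalso
          apply hij
          apply Subtype.ext
          have hi := i.2
          have hj := j.2
          simp only [Set.mem_singleton_iff] at hi hj
          rw [hi, hj]
      obtain ⟨b, hb⟩ := hON.exists_orthonormalBasis_extension_of_card_eq
        (by simp [finrank_euclideanSpace_fin])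
      have hb0 : b 0 = e := hb 0 rfl
      have hy2 : y = ‖y‖ • e := by
        rw [hedef, smul_smul, mul_inv_cancel₀ hynorm0, one_smul]
      have hrot := (b.measurePreserving_repr_symm).lintegral_comp hGm
      have hpoint : ∀ v : Ee (m+1), G (b.repr.symm v) = ENNReal.ofReal
          ((max 1 (max (‖v‖ ^ (m+2)) (|s - ‖y‖ * v 0| ^ (m+2))))⁻¹) := by
        intro v
        rw [hGdef]
        simp only []
        rw [LinearIsometryEquiv.norm_map]
        have hinner3 : (inner ℝ e (b.repr.symm v) : ℝ) = v 0 := by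
          rw [← hb0, ← OrthonormalBasis.repr_apply_apply,
            LinearIsometryEquiv.apply_symm_apply]
        have hinner2 : (inner ℝ y (b.repr.symm v) : ℝ) = ‖y‖ * v 0 := by
          conv_lhs => rw [hy2]
          rw [real_inner_smul_left, hinner3]
        rw [hinner2]
      calc (∫⁻ u : Ee (m+1), G u) = ∫⁻ v : Ee (m+1), G (b.repr.symm v) := hrot.symm
        _ = ∫⁻ v : Ee (m+1), ENNReal.ofReal
            ((max 1 (max (‖v‖ ^ (m+2)) (|s - ‖y‖ * v 0| ^ (m+2))))⁻¹) :=
          lintegral_congr hpoint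
        _ ≤ _ := core m ‖y‖ s (norm_nonneg y)
  -- Step 4: identify the right-hand side
  set M : ℝ := max 1 (max ‖x1‖ |s|) with hMdef
  have hM1 : (1:ℝ) ≤ M := le_max_left _ _
  have hM0 : (0:ℝ) < M := lt_of_lt_of_le one_pos hM1
  have hpow : M ^ (m+2) = max 1 (max (‖x1‖ ^ (m+2)) (|s| ^ (m+2))) := by
    rw [hMdef, max_pow_nonneg zero_le_one (by positivity), one_pow,
      max_pow_nonneg (norm_nonneg _) (abs_nonneg _)]
  have hrhs : (ENNReal.ofReal ((max 1 (max (‖x1‖ ^ (m+2)) (|s| ^ (m+2))))⁻¹))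
      ^ ((1 : ℝ) / (m+2 : ℕ)) = ENNReal.ofReal M⁻¹ := by
    rw [← hpow, ← inv_pow, ENNReal.ofReal_pow (by positivity),
      ← ENNReal.rpow_natCast (ENNReal.ofReal M⁻¹) (m+2), ← ENNReal.rpow_mul,
      mul_one_div_cancel (by exact_mod_cast (Nat.succ_ne_zero (m+1)) : ((m+2 : ℕ):ℝ) ≠ 0),
      ENNReal.rpow_one]
  -- Final comparison
  have hfinal : ENNReal.ofReal (2 * (max 1 (max ‖y‖ |s|))⁻¹) * Bconst * Iconst m
      ≤ (2 * Bconst * Iconst m) * ENNReal.ofReal M⁻¹ := by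
    have hKM : M ≤ max 1 (max ‖y‖ |s|) := by
      apply max_le (le_max_left _ _)
      apply max_le _ (le_trans (le_max_right _ _) (le_max_right _ _))
      refine le_trans ?_ (le_trans (le_max_left _ _) (le_max_right _ _))
      rw [hyn]
      linarith [norm_nonneg x1]
    have h1 : ENNReal.ofReal (2 * (max 1 (max ‖y‖ |s|))⁻¹)
        ≤ 2 * ENNReal.ofReal M⁻¹ := by
      rw [ENNReal.ofReal_mul (by norm_num), ENNReal.ofReal_ofNat]
      exact mul_le_mul_right (ENNReal.ofReal_le_ofReal (inv_anti₀ hM0 hKM)) 2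
    calc ENNReal.ofReal (2 * (max 1 (max ‖y‖ |s|))⁻¹) * Bconst * Iconst m
        ≤ (2 * ENNReal.ofReal M⁻¹) * Bconst * Iconst m := by gcongr
      _ = (2 * Bconst * Iconst m) * ENNReal.ofReal M⁻¹ := by ring
  calc (∫⁻ t : Ee (m+1), ENNReal.ofReal
        ((max 1 (max (‖x1 + t‖ ^ (m+2)) (|x2 + ‖t‖ ^ 2 - ‖x1 + t‖ ^ 2| ^ (m+2))))⁻¹))
      = ∫⁻ u : Ee (m+1), G u := by rw [step1, step2]
    _ ≤ ENNReal.ofReal (2 * (max 1 (max ‖y‖ |s|))⁻¹) * Bconst * Iconst m := step3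
    _ ≤ (2 * Bconst * Iconst m) * ENNReal.ofReal M⁻¹ := hfinal
    _ = _ := by rw [hrhs]

end
end TstarProof

/-- For `d ≥ 2` there is a finite constant `C_d` with `T^*(υ) ≤ C_d · υ_*^{1/d}` pointwise. -/
theorem TstarLin_ups_le (d : ℕ) (hd : 2 ≤ d) :
    ∃ C : ENNReal, C < ⊤ ∧ ∀ x : Pt d,
      TstarLin d (ups d) x ≤ C * (upsStar d x) ^ ((1 : ℝ) / d) := by
  obtain ⟨m, rfl⟩ : ∃ m, d = m + 2 := ⟨d - 2, by omega⟩
  refine ⟨2 * TstarProof.Bconst * TstarProof.Iconst m, ?_, ?_⟩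
  · exact ENNReal.mul_lt_top
      (ENNReal.mul_lt_top (by norm_num) TstarProof.Bconst_lt_top)
      (TstarProof.Iconst_lt_top m)
  intro x
  exact TstarProof.main_est m x.1 x.2
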